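/- For every r₀ > r_SAdS, the function s ↦ 1/F(s) is integrable on (r₀, ∞) (the improper integral ∫_{r₀}^∞ F(s)^{−1} ds is finite), and ∫_{r}^{r₀} F(s)^{−1} ds → +∞ as r → r_SAdS from the right. Consequently r ↦ −∫_r^∞ F(s)^{−1} ds is a strictly increasing bijection from (r_SAdS, ∞) onto (−∞, 0). -/

import Mathlib

open MeasureTheory Filter Set Topology

/-- The metric coefficient `F(r) = 1 - 2M/r + r²/l²`. -/
noncomputable def F (M l r : ℝ) : ℝ := 1 - 2*M/r + r^2/l^2

section helpers

variable {M l rSAdS : ℝ}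

lemma F_factor (hl : 0 < l) (hrS : 0 < rSAdS) (hroot : F M l rSAdS = 0)
    {s : ℝ} (hs : 0 < s) :
    F M l s = (s - rSAdS) * (s^2 + s*rSAdS + rSAdS^2 + l^2) / (l^2 * s) := by
  have h0 : rSAdS ≠ 0 := hrS.ne'
  have hl0 : l ≠ 0 := hl.ne'
  have hs0 : s ≠ 0 := hs.ne'
  unfold F at hroot ⊢
  field_simp at hroot ⊢
  linear_combination hroot

lemma invF_contOn (hl : 0 < l) (hrS : 0 < rSAdS)
    (hFpos : ∀ r, rSAdS < r → 0 < F M l r) {c : ℝ} (hc : rSAdS < c) :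
    ContinuousOn (fun s => (F M l s)⁻¹) (Ici c) := by
  have h0 : ∀ x ∈ Ici c, x ≠ 0 := fun x hx => (lt_of_lt_of_le (hrS.trans hc) hx).ne'
  apply ContinuousOn.inv₀
  · apply ContinuousOn.add
    · exact continuousOn_const.sub (continuousOn_const.div continuousOn_id h0)
    · exact ((continuousOn_id.pow 2).div_const _)
  · exact fun x hx => (hFpos x (lt_of_lt_of_le hc hx)).ne'

lemma invF_integrableOn_Ioc (hl : 0 < l) (hrS : 0 < rSAdS)
    (hFpos : ∀ r, rSAdS < r → 0 < F M l r) {a b : ℝ} (ha : rSAdS < a) :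
    IntegrableOn (fun s => (F M l s)⁻¹) (Ioc a b) :=
  (((invF_contOn hl hrS hFpos ha).mono Icc_subset_Ici_self).integrableOn_Icc).mono_set
    Ioc_subset_Icc_self

lemma invF_integrableOn (hM : 0 < M) (hl : 0 < l) (hrS : 0 < rSAdS)
    (hFpos : ∀ r, rSAdS < r → 0 < F M l r) {r₀ : ℝ} (h : rSAdS < r₀) :
    IntegrableOn (fun s => (F M l s)⁻¹) (Ioi r₀) := by
  set K := max r₀ (2*M) with hK
  have hr₀K : r₀ ≤ K := le_max_left _ _
  have hrK : rSAdS < K := h.trans_le hr₀K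
  have hK0 : 0 < K := hrS.trans hrK
  rw [← Ioc_union_Ioi_eq_Ioi hr₀K, integrableOn_union]
  refine ⟨invF_integrableOn_Ioc hl hrS hFpos h, ?_⟩
  have hg : IntegrableOn (fun s : ℝ => l^2 * s ^ (-2:ℝ)) (Ioi K) :=
    (integrableOn_Ioi_rpow_of_lt (by norm_num) hK0).const_mul _
  apply Integrable.mono hg
  · exact (((invF_contOn hl hrS hFpos hrK).mono (Ioi_subset_Ici le_rfl)).aestronglyMeasurable
      measurableSet_Ioi)
  · rw [ae_restrict_iff' measurableSet_Ioi]
    filter_upwards with s hs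
    have hs0 : 0 < s := hK0.trans hs
    have hs2M : 2*M ≤ s := (le_max_right _ _).trans hs.le
    have hFp : 0 < F M l s := hFpos s (hrK.trans hs)
    have hrpow : s ^ (-2:ℝ) = (s^2)⁻¹ := by
      rw [show (-2:ℝ) = -(2:ℕ) by norm_num, Real.rpow_neg hs0.le, Real.rpow_natCast]
    have hFl : s^2/l^2 ≤ F M l s := by
      unfold F
      have h1 : 2*M/s ≤ 1 := by rw [div_le_one hs0]; linarith
      linarith
    have hq : 0 < s^2/l^2 := by positivity
    have h2 : (F M l s)⁻¹ ≤ l^2 * s^(-2:ℝ) := by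
      rw [hrpow]
      calc (F M l s)⁻¹ ≤ (s^2/l^2)⁻¹ := inv_anti₀ hq hFl
        _ = l^2 * (s^2)⁻¹ := by rw [inv_div]; ring
    rw [Real.norm_eq_abs, Real.norm_eq_abs, abs_of_pos (inv_pos.mpr hFp),
      abs_of_pos (by positivity : (0:ℝ) < l^2 * s^(-2:ℝ))]
    exact h2

lemma integral_split (hM : 0 < M) (hl : 0 < l) (hrS : 0 < rSAdS)
    (hFpos : ∀ r, rSAdS < r → 0 < F M l r) {a b : ℝ} (ha : rSAdS < a) (hab : a ≤ b) :
    ∫ s in Ioi a, (F M l s)⁻¹ =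
      (∫ s in Ioc a b, (F M l s)⁻¹) + ∫ s in Ioi b, (F M l s)⁻¹ := by
  rw [← setIntegral_union (Ioc_disjoint_Ioi le_rfl) measurableSet_Ioi
    (invF_integrableOn_Ioc hl hrS hFpos ha)
    (invF_integrableOn hM hl hrS hFpos (ha.trans_le hab)),
    Ioc_union_Ioi_eq_Ioi hab]

lemma integral_Ioc_pos (hl : 0 < l) (hrS : 0 < rSAdS)
    (hFpos : ∀ r, rSAdS < r → 0 < F M l r) {a b : ℝ} (ha : rSAdS < a) (hab : a < b) :
    0 < ∫ s in Ioc a b, (F M l s)⁻¹ := by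
  rw [← intervalIntegral.integral_of_le hab.le]
  apply intervalIntegral.intervalIntegral_pos_of_pos_on
  · rw [intervalIntegrable_iff_integrableOn_Ioc_of_le hab.le]
    exact invF_integrableOn_Ioc hl hrS hFpos ha
  · exact fun x hx => inv_pos.mpr (hFpos x (ha.trans hx.1))
  · exact hab

lemma integral_Ioi_pos (hM : 0 < M) (hl : 0 < l) (hrS : 0 < rSAdS)
    (hFpos : ∀ r, rSAdS < r → 0 < F M l r) {a : ℝ} (ha : rSAdS < a) :
    0 < ∫ s in Ioi a, (F M l s)⁻¹ := by
  rw [integral_split hM hl hrS hFpos ha (le_of_lt (lt_add_one a))]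
  have h1 : 0 < ∫ s in Ioc a (a+1), (F M l s)⁻¹ :=
    integral_Ioc_pos hl hrS hFpos ha (lt_add_one a)
  have h2 : 0 ≤ ∫ s in Ioi (a+1), (F M l s)⁻¹ :=
    setIntegral_nonneg measurableSet_Ioi
      (fun x hx => (inv_pos.mpr (hFpos x (by linarith [mem_Ioi.mp hx]))).le)
  linarith

lemma tendsto_integral_atTop (hM : 0 < M) (hl : 0 < l) (hrS : 0 < rSAdS)
    (hroot : F M l rSAdS = 0) (hFpos : ∀ r, rSAdS < r → 0 < F M l r)
    {r₀ : ℝ} (h : rSAdS < r₀) :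
    Tendsto (fun r => ∫ s in Set.Ioc r r₀, (F M l s)⁻¹)
      (nhdsWithin rSAdS (Set.Ioi rSAdS)) atTop := by
  set G₀ : ℝ := r₀^2 + r₀*rSAdS + rSAdS^2 + l^2 with hG₀
  have hG₀pos : 0 < G₀ := by
    rw [hG₀]; nlinarith [mul_pos (hrS.trans h) hrS, sq_nonneg r₀, mul_pos hl hl]
  set c : ℝ := l^2 * rSAdS / G₀ with hc
  have hcpos : 0 < c := by rw [hc, hG₀]; positivity
  -- pointwise bound on (rSAdS, r₀]
  have hpw : ∀ s, rSAdS < s → s ≤ r₀ → c * (s - rSAdS)⁻¹ ≤ (F M l s)⁻¹ := by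
    intro s hs1 hs2
    have hs0 : 0 < s := hrS.trans hs1
    have hFp : 0 < F M l s := hFpos s hs1
    have hsub : 0 < s - rSAdS := sub_pos.mpr hs1
    have h1 : F M l s ≤ (s - rSAdS) * G₀ / (l^2 * rSAdS) := by
      rw [F_factor hl hrS hroot hs0]
      apply div_le_div₀ (mul_nonneg hsub.le hG₀pos.le) ?_ (by positivity) ?_
      · apply mul_le_mul_of_nonneg_left ?_ hsub.le
        nlinarith
      · nlinarith
    have h2 : ((s - rSAdS) * G₀ / (l^2 * rSAdS))⁻¹ ≤ (F M l s)⁻¹ :=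
      inv_anti₀ hFp h1
    calc c * (s - rSAdS)⁻¹ = ((s - rSAdS) * G₀ / (l^2 * rSAdS))⁻¹ := by
          rw [div_eq_mul_inv, mul_inv, mul_inv, inv_inv, hc, div_eq_mul_inv]; ring
      _ ≤ (F M l s)⁻¹ := h2
  -- integral lower bound
  have key : ∀ r ∈ Ioo rSAdS r₀,
      c * Real.log ((r₀ - rSAdS)/(r - rSAdS)) ≤ ∫ s in Ioc r r₀, (F M l s)⁻¹ := by
    intro r hr
    have hr1 : rSAdS < r := hr.1
    have hr2 : r < r₀ := hr.2
    have hcont1 : ContinuousOn (fun s : ℝ => c * (s - rSAdS)⁻¹) (Icc r r₀) :=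
      continuousOn_const.mul (ContinuousOn.inv₀ (continuousOn_id.sub continuousOn_const)
        (fun x hx => (sub_pos.mpr (hr1.trans_le hx.1)).ne'))
    have hint1 : IntegrableOn (fun s => c * (s - rSAdS)⁻¹) (Ioc r r₀) :=
      (hcont1.integrableOn_Icc).mono_set Ioc_subset_Icc_self
    have hint2 : IntegrableOn (fun s => (F M l s)⁻¹) (Ioc r r₀) :=
      invF_integrableOn_Ioc hl hrS hFpos hr1
    have hmono := setIntegral_mono_on hint1 hint2 measurableSet_Ioc
      (fun x hx => hpw x (hr1.trans hx.1) hx.2)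
    refine le_trans (le_of_eq ?_) hmono
    rw [← intervalIntegral.integral_of_le hr2.le, intervalIntegral.integral_const_mul]
    have := intervalIntegral.integral_comp_sub_right (a := r) (b := r₀)
      (fun x : ℝ => x⁻¹) rSAdS
    rw [this, integral_inv_of_pos
      (show (0:ℝ) < r - rSAdS by linarith) (show (0:ℝ) < r₀ - rSAdS by linarith)]
  -- the log lower bound tends to atTop
  have h1 : Tendsto (fun r => r - rSAdS) (𝓝[>] rSAdS) (𝓝[>] (0:ℝ)) := by
    apply tendsto_nhdsWithin_of_tendsto_nhds_of_eventually_within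
    · exact ((continuous_id.sub continuous_const).tendsto' rSAdS 0 (by simp)).mono_left
        nhdsWithin_le_nhds
    · filter_upwards [self_mem_nhdsWithin] with x hx
      simpa [sub_pos] using hx
  have h2 : Tendsto (fun r => Real.log (r - rSAdS)) (𝓝[>] rSAdS) atBot :=
    Real.tendsto_log_nhdsGT_zero.comp h1
  have h3 : Tendsto (fun r => Real.log (r₀ - rSAdS) + -Real.log (r - rSAdS))
      (𝓝[>] rSAdS) atTop :=
    tendsto_atTop_add_const_left _ _ (tendsto_neg_atBot_atTop.comp h2)
  have h4 : Tendsto (fun r => c * Real.log ((r₀ - rSAdS)/(r - rSAdS)))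
      (𝓝[>] rSAdS) atTop := by
    apply Tendsto.const_mul_atTop hcpos
    apply h3.congr'
    filter_upwards [self_mem_nhdsWithin] with r hr
    rw [Real.log_div (by linarith) (by simp only [mem_Ioi] at hr; linarith)]
    ring
  exact tendsto_atTop_mono' _
    (by filter_upwards [Ioo_mem_nhdsGT_of_mem ⟨le_refl _, h⟩] with r hr using key r hr) h4

end helpers

/-- For every `r₀ > r_SAdS`, `s ↦ 1/F(s)` is integrable on `(r₀,∞)`;
`∫_r^{r₀} F(s)⁻¹ ds → +∞` as `r → r_SAdS⁺`; consequently
`r ↦ −∫_r^∞ F(s)⁻¹ ds` is a strictly increasing bijection from `(r_SAdS,∞)`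
onto `(−∞,0)`. -/
theorem stmt_1 (M l : ℝ) (hM : 0 < M) (hl : 0 < l)
    (rSAdS : ℝ) (hrS : 0 < rSAdS) (hroot : F M l rSAdS = 0)
    (huniq : ∀ r, 0 < r → F M l r = 0 → r = rSAdS)
    (hFpos : ∀ r, rSAdS < r → 0 < F M l r) :
    (∀ r₀, rSAdS < r₀ → IntegrableOn (fun s => (F M l s)⁻¹) (Set.Ioi r₀)) ∧
    (∀ r₀, rSAdS < r₀ →
      Tendsto (fun r => ∫ s in Set.Ioc r r₀, (F M l s)⁻¹)
        (nhdsWithin rSAdS (Set.Ioi rSAdS)) atTop) ∧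
    StrictMonoOn (fun r => -∫ s in Set.Ioi r, (F M l s)⁻¹) (Set.Ioi rSAdS) ∧
    Set.BijOn (fun r => -∫ s in Set.Ioi r, (F M l s)⁻¹)
      (Set.Ioi rSAdS) (Set.Iio 0) := by
  set φ : ℝ → ℝ := fun r => -∫ s in Set.Ioi r, (F M l s)⁻¹ with hφ
  have hsm : StrictMonoOn φ (Set.Ioi rSAdS) := by
    intro a ha b hb hab
    simp only [hφ, neg_lt_neg_iff]
    rw [integral_split hM hl hrS hFpos (mem_Ioi.mp ha) hab.le]
    have := integral_Ioc_pos hl hrS hFpos (mem_Ioi.mp ha) hab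
    linarith
  refine ⟨fun r₀ h => invF_integrableOn hM hl hrS hFpos h,
    fun r₀ h => tendsto_integral_atTop hM hl hrS hroot hFpos h, hsm, ?_, hsm.injOn, ?_⟩
  · -- MapsTo
    intro r hr
    simp only [hφ, mem_Iio, neg_neg, Left.neg_neg_iff]
    exact integral_Ioi_pos hM hl hrS hFpos (mem_Ioi.mp hr)
  · -- SurjOn
    intro y hy
    have hy0 : y < 0 := mem_Iio.mp hy
    -- choose b large so that φ b > y
    obtain ⟨b, hb1, hb2⟩ : ∃ b, rSAdS < b ∧ y < φ b := by
      set b : ℝ := max (max (2*M) (rSAdS + 1)) (l^2/(-y) + 1) with hbdef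
      have hb2M : 2*M ≤ b := le_trans (le_max_left _ _) (le_max_left _ _)
      have hbrS : rSAdS < b := by
        have := le_trans (le_max_right (2*M) (rSAdS+1))
          (le_max_left (max (2*M) (rSAdS+1)) (l^2/(-y) + 1))
        linarith
      have hb0 : 0 < b := hrS.trans hbrS
      have hbl : l^2/(-y) + 1 ≤ b := le_max_right _ _
      refine ⟨b, hbrS, ?_⟩
      have hbound : ∫ s in Ioi b, (F M l s)⁻¹ ≤ l^2/b := by
        have hg : IntegrableOn (fun s : ℝ => l^2 * s ^ (-2:ℝ)) (Ioi b) :=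
          (integrableOn_Ioi_rpow_of_lt (by norm_num) hb0).const_mul _
        have hmono := setIntegral_mono_on (invF_integrableOn hM hl hrS hFpos hbrS) hg
          measurableSet_Ioi (fun s hs => by
            have hs0 : 0 < s := hb0.trans hs
            have hrpow : s ^ (-2:ℝ) = (s^2)⁻¹ := by
              rw [show (-2:ℝ) = -(2:ℕ) by norm_num, Real.rpow_neg hs0.le, Real.rpow_natCast]
            have hFl : s^2/l^2 ≤ F M l s := by
              unfold F
              have h1 : 2*M/s ≤ 1 := by
                rw [div_le_one hs0]
                linarith [hb2M.trans hs.le]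
              linarith
            have hq : (0:ℝ) < s^2/l^2 := by positivity
            calc (F M l s)⁻¹ ≤ (s^2/l^2)⁻¹ := inv_anti₀ hq hFl
              _ = l^2 * s^(-2:ℝ) := by rw [hrpow, inv_div]; ring)
        calc ∫ s in Ioi b, (F M l s)⁻¹ ≤ ∫ s in Ioi b, l^2 * s^(-2:ℝ) := hmono
          _ = l^2 * ∫ s in Ioi b, s^(-2:ℝ) := integral_const_mul _ _
          _ = l^2/b := by
              rw [integral_Ioi_rpow_of_lt (by norm_num) hb0]
              rw [show (-2:ℝ) + 1 = -1 by norm_num, Real.rpow_neg_one]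
              field_simp
      have hlb : l^2/b < -y := by
        rw [div_lt_iff₀ hb0]
        have h1 : l^2/(-y) < b := by linarith
        have h2 := (div_lt_iff₀ (by linarith : (0:ℝ) < -y)).mp h1
        nlinarith [h2]
      simp only [hφ]
      linarith [hbound]
    -- choose a close to rSAdS so that φ a < y, with a < b
    obtain ⟨a, ha1, ha2⟩ : ∃ a ∈ Ioo rSAdS b, -y < ∫ s in Ioc a b, (F M l s)⁻¹ := by
      have ht := tendsto_integral_atTop hM hl hrS hroot hFpos hb1
      have hev : ∀ᶠ r in 𝓝[>] rSAdS, (-y < ∫ s in Ioc r b, (F M l s)⁻¹) ∧ r ∈ Ioo rSAdS b := by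
        filter_upwards [ht.eventually_gt_atTop (-y), Ioo_mem_nhdsGT_of_mem ⟨le_refl _, hb1⟩]
          with r h1 h2
        exact ⟨h1, h2⟩
      obtain ⟨a, ha⟩ := hev.exists
      exact ⟨a, ha.2, ha.1⟩
    have haS : rSAdS < a := ha1.1
    have hab : a < b := ha1.2
    have hφa : φ a < y := by
      have hsplit := integral_split hM hl hrS hFpos haS hab.le
      have hnn : 0 ≤ ∫ s in Ioi b, (F M l s)⁻¹ :=
        setIntegral_nonneg measurableSet_Ioi
          (fun x hx => (inv_pos.mpr (hFpos x (hb1.trans (mem_Ioi.mp hx)))).le)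
      simp only [hφ]
      rw [hsplit]
      linarith
    -- continuity of φ on Icc a b
    have hcont : ContinuousOn φ (Icc a b) := by
      have hprim : ContinuousOn (fun x => ∫ t in Ioc a x, (F M l t)⁻¹) (Icc a b) :=
        intervalIntegral.continuousOn_primitive ((invF_contOn hl hrS hFpos haS).mono
          Icc_subset_Ici_self).integrableOn_Icc
      have heq : ∀ x ∈ Icc a b, φ x =
          (∫ t in Ioc a x, (F M l t)⁻¹) - (∫ t in Ioc a b, (F M l t)⁻¹)
            - ∫ t in Ioi b, (F M l t)⁻¹ := by
        intro x hx
        have hxS : rSAdS < x := haS.trans_le hx.1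
        have h1 := integral_split hM hl hrS hFpos hxS hx.2
        have h2 : (∫ t in Ioc a b, (F M l t)⁻¹) =
            (∫ t in Ioc a x, (F M l t)⁻¹) + ∫ t in Ioc x b, (F M l t)⁻¹ := by
          rw [← setIntegral_union (Ioc_disjoint_Ioc_of_le le_rfl) measurableSet_Ioc
            (invF_integrableOn_Ioc hl hrS hFpos haS)
            (invF_integrableOn_Ioc hl hrS hFpos hxS),
            Ioc_union_Ioc_eq_Ioc hx.1 hx.2]
        simp only [hφ]
        rw [h1]
        linarith
      exact (hprim.sub continuousOn_const).sub continuousOn_const |>.congr heq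
    have hyy : y ∈ Icc (φ a) (φ b) := ⟨hφa.le, hb2.le⟩
    obtain ⟨x, hx1, hx2⟩ := intermediate_value_Icc hab.le hcont hyy
    exact ⟨x, mem_Ioi.mpr (haS.trans_le hx1.1), hx2⟩
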